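/- arXiv:2605.20828 — 2 statements merged into one kernel-verified Lean document; each statement's English description precedes it below -/
import Mathlib

section
/- Let p ≥ 4 be an even integer and let m_r = E|N|^r denote the r-th absolute moment of a standard normal N. Let (ρ_0^{(p)},...,ρ_{p/2}^{(p)}) be the unique solution of the triangular system ρ_0^{(p)} = 1 and Σ_{l=0}^{j} 2^l m_{2j-2l} binom(p-2l, p-2j) ρ_l^{(p)} = 0 for j = 1,...,p/2. Then for every a ≥ 0, b ≥ 0 and x ∈ ℝ, Σ_{l=0}^{p/2} ρ_l^{(p)} E[ |sqrt(a+b) N + x|^{p-2l} ] (2b)^l = E |sqrt(a) N + x|^p, where N ~ N(0,1). -/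
open MeasureTheory ProbabilityTheory Finset

/-- `m r = E|N|^r` for a standard Gaussian `N`. -/
noncomputable def gaussAbsMoment (r : ℕ) : ℝ :=
  ∫ x, |x| ^ r ∂(gaussianReal 0 1)

open Real
open scoped ENNReal NNReal


lemma gauss_eq : gaussianReal 0 1
    = MeasureTheory.volume.withDensity (fun x => ((gaussianPDFReal 0 1 x).toNNReal : ℝ≥0∞)) := by
  rw [gaussianReal_of_var_ne_zero _ one_ne_zero]
  rfl

lemma pdf01 (x : ℝ) : gaussianPDFReal 0 1 x = (Real.sqrt (2*π))⁻¹ * Real.exp (-(1/2) * x ^ 2) := by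
  simp only [gaussianPDFReal, NNReal.coe_one, mul_one, sub_zero]
  ring_nf

lemma integral_gauss01 (g : ℝ → ℝ) :
    ∫ z, g z ∂(gaussianReal 0 1) = ∫ z, gaussianPDFReal 0 1 z * g z := by
  rw [gauss_eq, integral_withDensity_eq_integral_smul
    ((measurable_gaussianPDFReal 0 1).real_toNNReal)]
  congr 1
  ext z
  simp [NNReal.smul_def, Real.coe_toNNReal _ (gaussianPDFReal_nonneg 0 1 z)]


noncomputable def G (n : ℕ) : ℝ := ∫ x : ℝ, x ^ n * Real.exp (-(1/2) * x ^ 2)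

lemma integrable_pow_exp (n : ℕ) :
    Integrable (fun x : ℝ => x ^ n * Real.exp (-(1/2) * x ^ 2)) := by
  have h := integrable_rpow_mul_exp_neg_mul_sq (b := 1/2) (by norm_num)
    (s := n) (lt_of_lt_of_le neg_one_lt_zero (Nat.cast_nonneg n))
  simpa [Real.rpow_natCast] using h

lemma G_zero : G 0 = Real.sqrt (2 * π) := by
  have := integral_gaussian (1/2)
  simp only [G, pow_zero, one_mul]
  rw [this, show π / (1/2 : ℝ) = 2 * π by ring]

lemma hasDeriv_aux (n : ℕ) (x : ℝ) :
    HasDerivAt (fun x : ℝ => x ^ (n+1) * Real.exp (-(1/2) * x ^ 2))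
      ((n+1 : ℝ) * (x ^ n * Real.exp (-(1/2) * x ^ 2)) - x ^ (n+2) * Real.exp (-(1/2) * x ^ 2)) x := by
  have h1 : HasDerivAt (fun x : ℝ => x ^ (n+1)) ((n+1 : ℝ) * x ^ n) x := by
    simpa using hasDerivAt_pow (n+1) x
  have h2 : HasDerivAt (fun x : ℝ => Real.exp (-(1/2) * x ^ 2))
      (Real.exp (-(1/2) * x ^ 2) * (-(1/2) * (2 * x ^ 1))) x := by
    exact ((hasDerivAt_pow 2 x).const_mul (-(1/2 : ℝ))).exp
  refine (h1.fun_mul h2).congr_deriv ?_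
  ring

lemma G_succ_succ (n : ℕ) : G (n + 2) = (n + 1) * G n := by
  have hz := integral_eq_zero_of_hasDerivAt_of_integrable (hasDeriv_aux n)
    (((integrable_pow_exp n).const_mul _).sub (integrable_pow_exp (n+2)))
    (integrable_pow_exp (n+1))
  rw [integral_sub ((integrable_pow_exp n).const_mul _) (integrable_pow_exp (n+2)),
    integral_const_mul] at hz
  have : ((n:ℝ)+1) * G n - G (n+2) = 0 := hz
  linarith

lemma G_one : G 1 = 0 := by
  have hd : ∀ x : ℝ, HasDerivAt (fun x : ℝ => -Real.exp (-(1/2) * x ^ 2))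
      (x ^ 1 * Real.exp (-(1/2) * x ^ 2)) x := by
    intro x
    have h2 : HasDerivAt (fun x : ℝ => Real.exp (-(1/2) * x ^ 2))
        (Real.exp (-(1/2) * x ^ 2) * (-(1/2) * (2 * x ^ 1))) x :=
      ((hasDerivAt_pow 2 x).const_mul (-(1/2 : ℝ))).exp
    refine h2.fun_neg.congr_deriv ?_
    ring
  have hz := integral_eq_zero_of_hasDerivAt_of_integrable hd (integrable_pow_exp 1)
    ((by simpa using integrable_pow_exp 0 : Integrable fun x : ℝ => Real.exp (-(1/2) * x^2)).neg)
  simpa [G] using hz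

lemma G_odd : ∀ i : ℕ, G (2 * i + 1) = 0 := by
  intro i
  induction i with
  | zero => simpa using G_one
  | succ i ih =>
    have : 2 * (i+1) + 1 = (2*i+1) + 2 := by ring
    rw [this, G_succ_succ, ih, mul_zero]
noncomputable def mu (k : ℕ) : ℝ := ∫ z, z ^ k ∂(gaussianReal 0 1)

lemma mu_eq (k : ℕ) : mu k = (Real.sqrt (2*π))⁻¹ * G k := by
  rw [mu, integral_gauss01]
  have h : ∀ x : ℝ, gaussianPDFReal 0 1 x * x ^ k
      = (Real.sqrt (2*π))⁻¹ * (x ^ k * Real.exp (-(1/2) * x ^ 2)) := by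
    intro x; rw [pdf01]; ring
  simp only [h]
  rw [integral_const_mul, G]

lemma integrable_pow_gauss (k : ℕ) :
    Integrable (fun z : ℝ => z ^ k) (gaussianReal 0 1) := by
  rw [gauss_eq, integrable_withDensity_iff_integrable_smul
    ((measurable_gaussianPDFReal 0 1).real_toNNReal)]
  have h : (fun x : ℝ => ((gaussianPDFReal 0 1 x).toNNReal : ℝ≥0) • x ^ k)
      = fun x : ℝ => (Real.sqrt (2*π))⁻¹ * (x ^ k * Real.exp (-(1/2) * x ^ 2)) := by
    ext x
    simp only [NNReal.smul_def, Real.coe_toNNReal _ (gaussianPDFReal_nonneg 0 1 x), smul_eq_mul]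
    rw [pdf01]; ring
  rw [h]
  exact (integrable_pow_exp k).const_mul _

lemma mu_odd (i : ℕ) : mu (2*i+1) = 0 := by
  rw [mu_eq, G_odd, mul_zero]

lemma mu_even (i : ℕ) : gaussAbsMoment (2*i) = mu (2*i) := by
  rw [gaussAbsMoment, mu]
  congr 1
  ext x
  exact Even.pow_abs (even_two_mul i) x

lemma M_zero : gaussAbsMoment 0 = 1 := by
  simp [gaussAbsMoment]

lemma M_succ (i : ℕ) : gaussAbsMoment (2*(i+1)) = (2*i+1) * gaussAbsMoment (2*i) := by
  rw [mu_even, mu_even, mu_eq, mu_eq, show 2*(i+1) = 2*i+2 by ring, G_succ_succ]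
  push_cast
  ring

lemma M_val (i : ℕ) : gaussAbsMoment (2*i) = ((2*i).factorial : ℝ) / (2^i * i.factorial) := by
  induction i with
  | zero => simpa using M_zero
  | succ i ih =>
    rw [M_succ, ih, show 2*(i+1) = (2*i+1)+1 by ring, Nat.factorial_succ, Nat.factorial_succ,
      Nat.factorial_succ]
    push_cast
    have h1 : ((2^i : ℝ)) ≠ 0 := by positivity
    have h2 : ((i.factorial : ℝ)) ≠ 0 := by exact_mod_cast i.factorial_ne_zero
    field_simp
    ring

lemma sum_even_odd (N : ℕ) (g : ℕ → ℝ) :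
    ∑ j ∈ range (2*N+1), g j
      = ∑ i ∈ range (N+1), g (2*i) + ∑ i ∈ range N, g (2*i+1) := by
  induction N with
  | zero => simp
  | succ N ih =>
    rw [show 2*(N+1)+1 = (2*N+1) + 1 + 1 by ring, sum_range_succ, sum_range_succ, ih,
      sum_range_succ (fun i => g (2*i)) (N+1), sum_range_succ (fun i => g (2*i+1)) N,
      show 2*(N+1) = 2*N+1+1 by ring]
    ring

lemma integral_affine_pow (σ x : ℝ) (n : ℕ) :
    ∫ z, (σ * z + x) ^ n ∂(gaussianReal 0 1)
      = ∑ k ∈ range (n+1), (n.choose k : ℝ) * σ^k * mu k * x^(n-k) := by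
  have h : ∀ z : ℝ, (σ * z + x) ^ n
      = ∑ k ∈ range (n+1), ((n.choose k : ℝ) * σ^k * x^(n-k)) * z ^ k := by
    intro z
    rw [add_pow]
    refine Finset.sum_congr rfl fun k _ => ?_
    rw [mul_pow]; ring
  simp only [h]
  rw [integral_finset_sum _ (fun k _ => (integrable_pow_gauss k).const_mul _)]
  refine Finset.sum_congr rfl fun k _ => ?_
  rw [integral_const_mul, ← mu]
  ring

lemma integral_abs_affine (c x : ℝ) (hc : 0 ≤ c) (k : ℕ) :
    ∫ z, |Real.sqrt c * z + x| ^ (2*k) ∂(gaussianReal 0 1)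
      = ∑ i ∈ range (k+1),
          ((2*k).choose (2*i) : ℝ) * gaussAbsMoment (2*i) * c^i * x^(2*(k-i)) := by
  have habs : ∀ z : ℝ, |Real.sqrt c * z + x| ^ (2*k) = (Real.sqrt c * z + x) ^ (2*k) :=
    fun z => Even.pow_abs (even_two_mul k) _
  simp only [habs]
  rw [integral_affine_pow, sum_even_odd]
  have hodd : ∑ i ∈ range k, ((2*k).choose (2*i+1) : ℝ) * Real.sqrt c ^ (2*i+1) * mu (2*i+1)
      * x ^ (2*k - (2*i+1)) = 0 := by
    refine Finset.sum_eq_zero fun i _ => ?_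
    rw [mu_odd]; ring
  rw [hodd, add_zero]
  refine Finset.sum_congr rfl fun i hi => ?_
  have hik : i ≤ k := by simpa using Nat.lt_succ_iff.mp (mem_range.mp hi)
  rw [← mu_even, show Real.sqrt c ^ (2*i) = (Real.sqrt c ^ 2) ^ i by rw [← pow_mul],
    Real.sq_sqrt hc, show 2*k - 2*i = 2*(k - i) by omega]
  ring

lemma key (s w M : ℕ) :
    (((2*s+2*w).factorial : ℝ) / (2^(s+w) * (s+w).factorial))
        * ((2*s+2*w+M).choose (2*s+2*w)) * ((s+w).choose s)
      = (((2*s).factorial : ℝ) / (2^s * s.factorial)) * ((2*s+M).choose (2*s)) *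
        ((((2*w).factorial : ℝ) / (2^w * w.factorial)) * ((2*s+2*w+M).choose (2*w))) := by
  rw [Nat.cast_choose ℝ (show 2*s+2*w ≤ 2*s+2*w+M by omega),
      Nat.cast_choose ℝ (show s ≤ s+w by omega),
      Nat.cast_choose ℝ (show 2*s ≤ 2*s+M by omega),
      Nat.cast_choose ℝ (show 2*w ≤ 2*s+2*w+M by omega),
      show 2*s+2*w+M - (2*s+2*w) = M by omega, show s+w-s = w by omega,
      show 2*s+M-2*s = M by omega, show 2*s+2*w+M-2*w = 2*s+M by omega]
  have f1 : ((2*s+2*w).factorial : ℝ) ≠ 0 := by exact_mod_cast (2*s+2*w).factorial_ne_zero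
  have f2 : ((s+w).factorial : ℝ) ≠ 0 := by exact_mod_cast (s+w).factorial_ne_zero
  have f3 : ((2*s).factorial : ℝ) ≠ 0 := by exact_mod_cast (2*s).factorial_ne_zero
  have f4 : ((2*w).factorial : ℝ) ≠ 0 := by exact_mod_cast (2*w).factorial_ne_zero
  have f5 : (s.factorial : ℝ) ≠ 0 := by exact_mod_cast s.factorial_ne_zero
  have f6 : (w.factorial : ℝ) ≠ 0 := by exact_mod_cast w.factorial_ne_zero
  have f7 : (M.factorial : ℝ) ≠ 0 := by exact_mod_cast M.factorial_ne_zero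
  have f8 : ((2*s+M).factorial : ℝ) ≠ 0 := by exact_mod_cast (2*s+M).factorial_ne_zero
  have p1 : ((2:ℝ)^(s+w)) ≠ 0 := by positivity
  have p2 : ((2:ℝ)^s) ≠ 0 := by positivity
  have p3 : ((2:ℝ)^w) ≠ 0 := by positivity
  field_simp
  rw [pow_add]

lemma tri (n : ℕ) (f : ℕ → ℕ → ℝ) :
    ∑ l ∈ range (n+1), ∑ i ∈ range (n+1-l), f l i
      = ∑ j ∈ range (n+1), ∑ l ∈ range (j+1), f l (j-l) := by
  induction n with
  | zero => simp
  | succ n ih =>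
    rw [sum_range_succ (n := n+1), sum_range_succ (n := n+1)]
    have h1 : ∑ l ∈ range (n+1), ∑ i ∈ range (n+1+1-l), f l i
        = (∑ l ∈ range (n+1), ∑ i ∈ range (n+1-l), f l i)
          + ∑ l ∈ range (n+1), f l (n+1-l) := by
      rw [← Finset.sum_add_distrib]
      refine Finset.sum_congr rfl fun l hl => ?_
      have hln : l ≤ n := Nat.lt_succ_iff.mp (mem_range.mp hl)
      rw [show n+1+1-l = (n+1-l)+1 by omega, sum_range_succ]
    rw [h1, ih]
    have h2 : ∑ i ∈ range (n+1+1-(n+1)), f (n+1) i = f (n+1) 0 := by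
      norm_num
    rw [h2, sum_range_succ (fun l => f l (n+1-l)) (n+1)]
    have h3 : f (n+1) (n+1-(n+1)) = f (n+1) 0 := by norm_num
    rw [h3]
    ring

lemma tri2 (n : ℕ) (g : ℕ → ℕ → ℝ) :
    ∑ l ∈ range (n+1), ∑ s ∈ range (n+1-l), g l s
      = ∑ s ∈ range (n+1), ∑ l ∈ range (n+1-s), g l s := by
  rw [tri n g, tri n (fun s l => g l s)]
  refine Finset.sum_congr rfl fun j hj => ?_
  have := Finset.sum_range_reflect (fun t => g (j-t) t) (j+1)
  simp only [Nat.add_sub_cancel] at this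
  rw [← this]
  refine Finset.sum_congr rfl fun l hl => ?_
  have hlj : l ≤ j := Nat.lt_succ_iff.mp (mem_range.mp hl)
  rw [show j - (j - l) = l by omega]

/-- Noise-correction identity with a deterministic shift. -/
theorem noise_correction_identity (p : ℕ) (hp : 4 ≤ p) (hpe : Even p)
    (ρ : ℕ → ℝ) (hρ0 : ρ 0 = 1)
    (hsys : ∀ j, 1 ≤ j → j ≤ p / 2 →
      ∑ l ∈ range (j + 1),
        (2 : ℝ) ^ l * gaussAbsMoment (2 * j - 2 * l) *
          ((p - 2 * l).choose (p - 2 * j) : ℝ) * ρ l = 0) :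
    ∀ a b : ℝ, 0 ≤ a → 0 ≤ b → ∀ x : ℝ,
      ∑ l ∈ range (p / 2 + 1),
        ρ l * (∫ z, |Real.sqrt (a + b) * z + x| ^ (p - 2 * l) ∂(gaussianReal 0 1)) *
          (2 * b) ^ l
      = ∫ z, |Real.sqrt a * z + x| ^ p ∂(gaussianReal 0 1) := by
  obtain ⟨h, rfl⟩ := hpe
  have hh : 2 ≤ h := by omega
  intro a b ha hb x
  have hab : (0:ℝ) ≤ a + b := by linarith
  -- the correction-coefficient sums
  have hS : ∀ t, 1 ≤ t → t ≤ h →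
      (∑ l ∈ range (t+1), (2:ℝ)^l * gaussAbsMoment (2*(t-l)) *
        (((2*(h-l)).choose (2*(t-l))) : ℝ) * ρ l) = 0 := by
    intro t ht1 hth
    refine Eq.trans ?_ (hsys t ht1 (by omega))
    refine Finset.sum_congr rfl fun l hl => ?_
    have hlt : l ≤ t := Nat.lt_succ_iff.mp (mem_range.mp hl)
    rw [show 2*t - 2*l = 2*(t-l) by omega, show h + h - 2*l = 2*(h-l) by omega,
      show h + h - 2*t = 2*(h-t) by omega,
      show 2*(t-l) = 2*(h-l) - 2*(h-t) by omega,
      Nat.choose_symm (show 2*(h-t) ≤ 2*(h-l) by omega)]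
  rw [show (h + h) / 2 = h by omega, show h + h = 2*h from (two_mul h).symm,
    integral_abs_affine a x ha h]
  have step1 : ∑ l ∈ range (h+1),
        ρ l * (∫ z, |Real.sqrt (a + b) * z + x| ^ (2*h - 2*l) ∂(gaussianReal 0 1)) * (2*b)^l
      = ∑ l ∈ range (h+1), ∑ i ∈ range (h+1-l),
          ρ l * ((2:ℝ)^l * b^l * ((((2*(h-l)).choose (2*i)):ℝ) * gaussAbsMoment (2*i)
            * (a+b)^i * x^(2*(h-l-i)))) := by
    refine Finset.sum_congr rfl fun l hl => ?_
    have hlh : l ≤ h := Nat.lt_succ_iff.mp (mem_range.mp hl)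
    rw [show 2*h - 2*l = 2*(h-l) by omega, integral_abs_affine (a+b) x hab (h-l),
      show h+1-l = (h-l)+1 by omega, Finset.mul_sum, Finset.sum_mul]
    refine Finset.sum_congr rfl fun i hi => ?_
    rw [mul_pow]
    ring
  have step2 : (∑ l ∈ range (h+1), ∑ i ∈ range (h+1-l),
          ρ l * ((2:ℝ)^l * b^l * ((((2*(h-l)).choose (2*i)):ℝ) * gaussAbsMoment (2*i)
            * (a+b)^i * x^(2*(h-l-i)))))
      = ∑ j ∈ range (h+1), ∑ l ∈ range (j+1),
          ρ l * ((2:ℝ)^l * b^l * ((((2*(h-l)).choose (2*(j-l))):ℝ) * gaussAbsMoment (2*(j-l))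
            * (a+b)^(j-l) * x^(2*(h-l-(j-l))))) :=
    tri h (fun l i => ρ l * ((2:ℝ)^l * b^l * ((((2*(h-l)).choose (2*i)):ℝ)
      * gaussAbsMoment (2*i) * (a+b)^i * x^(2*(h-l-i)))))
  rw [step1, step2]
  refine Finset.sum_congr rfl fun j hj => ?_
  have hjh : j ≤ h := Nat.lt_succ_iff.mp (mem_range.mp hj)
  calc
    ∑ l ∈ range (j+1),
        ρ l * ((2:ℝ)^l * b^l * ((((2*(h-l)).choose (2*(j-l))):ℝ) * gaussAbsMoment (2*(j-l))
          * (a+b)^(j-l) * x^(2*(h-l-(j-l)))))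
      = ∑ l ∈ range (j+1), ∑ s ∈ range (j+1-l),
          ρ l * (2:ℝ)^l * (((2*(h-l)).choose (2*(j-l))):ℝ) * gaussAbsMoment (2*(j-l))
            * (((j-l).choose s):ℝ) * a^s * b^(j-s) * x^(2*(h-j)) := by
        refine Finset.sum_congr rfl fun l hl => ?_
        have hlj : l ≤ j := Nat.lt_succ_iff.mp (mem_range.mp hl)
        rw [show 2*(h-l-(j-l)) = 2*(h-j) by omega, add_pow, show j+1-l = (j-l)+1 by omega]
        simp only [Finset.mul_sum, Finset.sum_mul]
        refine Finset.sum_congr rfl fun s hs => ?_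
        have hsl : s ≤ j - l := Nat.lt_succ_iff.mp (mem_range.mp hs)
        rw [show j - s = l + (j-l-s) by omega, pow_add]
        ring
    _ = ∑ s ∈ range (j+1), ∑ l ∈ range (j+1-s),
          ρ l * (2:ℝ)^l * (((2*(h-l)).choose (2*(j-l))):ℝ) * gaussAbsMoment (2*(j-l))
            * (((j-l).choose s):ℝ) * a^s * b^(j-s) * x^(2*(h-j)) :=
        tri2 j (fun l s => ρ l * (2:ℝ)^l * (((2*(h-l)).choose (2*(j-l))):ℝ)
          * gaussAbsMoment (2*(j-l)) * (((j-l).choose s):ℝ) * a^s * b^(j-s) * x^(2*(h-j)))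
    _ = ∑ s ∈ range (j+1),
          gaussAbsMoment (2*s) * (((2*s+2*(h-j)).choose (2*s)):ℝ) * a^s * b^(j-s) * x^(2*(h-j))
            * (∑ l ∈ range ((j-s)+1), (2:ℝ)^l * gaussAbsMoment (2*((j-s)-l)) *
                (((2*(h-l)).choose (2*((j-s)-l))) : ℝ) * ρ l) := by
        refine Finset.sum_congr rfl fun s hs => ?_
        have hsj : s ≤ j := Nat.lt_succ_iff.mp (mem_range.mp hs)
        rw [show j+1-s = (j-s)+1 by omega, Finset.mul_sum]
        refine Finset.sum_congr rfl fun l hl => ?_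
        have hljs : l ≤ j - s := Nat.lt_succ_iff.mp (mem_range.mp hl)
        simp only [M_val]
        rw [show 2*(j-l) = 2*s+2*(j-s-l) by omega,
          show j - l = s + (j-s-l) by omega,
          show 2*(h-l) = 2*s+2*(j-s-l)+2*(h-j) by omega]
        linear_combination (ρ l * (2:ℝ)^l * a^s * b^(j-s) * x^(2*(h-j))) *
          key s (j-s-l) (2*(h-j))
    _ = ((2*h).choose (2*j) : ℝ) * gaussAbsMoment (2*j) * a^j * x^(2*(h-j)) := by
        rw [Finset.sum_eq_single_of_mem j (self_mem_range_succ j)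
          (fun s hs hne => ?_)]
        · have : ∑ l ∈ range ((j-j)+1), (2:ℝ)^l * gaussAbsMoment (2*((j-j)-l)) *
              (((2*(h-l)).choose (2*((j-j)-l))) : ℝ) * ρ l = 1 := by
            simp [hρ0, M_zero]
          rw [this, show 2*j+2*(h-j) = 2*h by omega, Nat.sub_self, pow_zero]
          ring
        · have hsj : s ≤ j := Nat.lt_succ_iff.mp (mem_range.mp hs)
          rw [hS (j-s) (by omega) (by omega), mul_zero]
end

section
/- Let w(u) = sin(πu) on [0,1] and define L(q) = log ∫_0^1 w(u)^q du for q > 0. Then L is strictly convex on (0,∞), and for every p > 2 and every a > 1, the map a ↦ (1/2) L(2a) - (1/p) L(pa) is strictly decreasing; consequently, setting g = w and h = w^a with a > 1, the ratio γ'' = ( (∫_0^1 g^2)^{p/2} / ∫_0^1 g^p ) * ( ∫_0^1 h^p / (∫_0^1 h^2)^{p/2} ) satisfies γ'' > 1. -/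
open Real Set

/-- `L q = log ∫_0^1 sin(πu)^q du`. -/
noncomputable def sinLogMoment (q : ℝ) : ℝ :=
  Real.log (∫ u in (0:ℝ)..1, Real.sin (π * u) ^ q)

/-- `φ̄(q) = ∫_0^1 |φ(u)|^q du` for the weight `w^a` with `w(u) = sin(πu)`:
this is `∫_0^1 sin(πu)^(a q) du`. -/
noncomputable def sinPowMoment (a q : ℝ) : ℝ :=
  ∫ u in (0:ℝ)..1, Real.sin (π * u) ^ (a * q)

section Aux

open MeasureTheory intervalIntegral
open scoped ENNReal

/-- The basic moment integral. -/
noncomputable def sinI (q : ℝ) : ℝ := ∫ u in (0:ℝ)..1, Real.sin (π * u) ^ q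

lemma sin_nn {u : ℝ} (hu : u ∈ Icc (0:ℝ) 1) : 0 ≤ Real.sin (π * u) := by
  apply Real.sin_nonneg_of_nonneg_of_le_pi
  · nlinarith [hu.1, Real.pi_pos]
  · nlinarith [hu.2, Real.pi_pos]

lemma cont_pow {q : ℝ} (hq : 0 < q) : Continuous (fun u : ℝ => Real.sin (π * u) ^ q) := by
  apply Continuous.rpow_const (by continuity)
  exact fun x => Or.inr hq.le

lemma sinI_pos {q : ℝ} (hq : 0 < q) : 0 < sinI q := by
  apply intervalIntegral_pos_of_pos_on ((cont_pow hq).intervalIntegrable 0 1)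
  · intro x hx
    refine Real.rpow_pos_of_pos (Real.sin_pos_of_pos_of_lt_pi ?_ ?_) q
    · nlinarith [hx.1, Real.pi_pos]
    · nlinarith [hx.2, Real.pi_pos]
  · norm_num

lemma memLp_pow {q : ℝ} (hq : 0 < q) (r : ℝ≥0∞) :
    MemLp (fun u : ℝ => Real.sin (π * u) ^ q) r (volume.restrict (Ioc (0:ℝ) 1)) := by
  haveI : IsFiniteMeasure (volume.restrict (Ioc (0:ℝ) 1)) := by
    constructor
    rw [Measure.restrict_apply_univ]
    simp [Real.volume_Ioc]
  apply MemLp.of_bound (cont_pow hq).aestronglyMeasurable 1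
  rw [ae_restrict_iff' measurableSet_Ioc]
  filter_upwards with u hu
  have h0 : 0 ≤ Real.sin (π * u) := sin_nn (Ioc_subset_Icc_self hu)
  rw [Real.norm_eq_abs, abs_of_nonneg (Real.rpow_nonneg h0 q)]
  exact Real.rpow_le_one h0 (Real.sin_le_one _) hq.le

lemma sinI_eq_set (q : ℝ) : sinI q = ∫ u in Ioc (0:ℝ) 1, Real.sin (π * u) ^ q := by
  rw [sinI, intervalIntegral.integral_of_le (by norm_num : (0:ℝ) ≤ 1)]

lemma sinI_holder {x y t s : ℝ} (hx : 0 < x) (hy : 0 < y) (ht : 0 < t) (hs : 0 < s)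
    (hts : t + s = 1) : sinI (t * x + s * y) ≤ sinI x ^ t * sinI y ^ s := by
  have hconj : (1/t).HolderConjugate (1/s) := by
    rw [Real.holderConjugate_iff]
    constructor
    · rw [lt_div_iff₀ ht]; linarith
    · simp only [one_div, inv_inv]; exact hts
  have hf := memLp_pow (mul_pos ht hx) (ENNReal.ofReal (1/t))
  have hg := memLp_pow (mul_pos hs hy) (ENNReal.ofReal (1/s))
  have hnn : ∀ c : ℝ, 0 ≤ᵐ[volume.restrict (Ioc (0:ℝ) 1)]
      (fun u : ℝ => Real.sin (π * u) ^ c) := by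
    intro c
    rw [Filter.EventuallyLE, ae_restrict_iff' measurableSet_Ioc]
    filter_upwards with u hu
    exact Real.rpow_nonneg (sin_nn (Ioc_subset_Icc_self hu)) c
  have key := integral_mul_le_Lp_mul_Lq_of_nonneg hconj (hnn (t*x)) (hnn (s*y)) hf hg
  have e1 : ∫ u in Ioc (0:ℝ) 1, Real.sin (π * u) ^ (t*x) * Real.sin (π * u) ^ (s*y)
      = sinI (t * x + s * y) := by
    rw [sinI_eq_set]
    apply setIntegral_congr_fun measurableSet_Ioc
    intro u hu
    dsimp only
    rw [← Real.rpow_add' (sin_nn (Ioc_subset_Icc_self hu)) (by positivity)]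
  have e2 : ∫ u in Ioc (0:ℝ) 1, (Real.sin (π * u) ^ (t*x)) ^ (1/t) = sinI x := by
    rw [sinI_eq_set]
    apply setIntegral_congr_fun measurableSet_Ioc
    intro u hu
    dsimp only
    rw [← Real.rpow_mul (sin_nn (Ioc_subset_Icc_self hu))]
    congr 1
    field_simp
  have e3 : ∫ u in Ioc (0:ℝ) 1, (Real.sin (π * u) ^ (s*y)) ^ (1/s) = sinI y := by
    rw [sinI_eq_set]
    apply setIntegral_congr_fun measurableSet_Ioc
    intro u hu
    dsimp only
    rw [← Real.rpow_mul (sin_nn (Ioc_subset_Icc_self hu))]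
    congr 1
    field_simp
  rw [e1, e2, e3] at key
  simpa [one_div_one_div] using key

lemma sinI_midpoint_sq_lt {x y : ℝ} (hx : 0 < x) (hy : 0 < y) (hne : x ≠ y) :
    sinI ((x + y) / 2) ^ 2 < sinI x * sinI y := by
  set A := sinI x with hA
  set C := sinI y with hC
  set M := sinI ((x + y) / 2) with hM
  have hApos : 0 < A := sinI_pos hx
  have hCpos : 0 < C := sinI_pos hy
  have hMpos : 0 < M := sinI_pos (by positivity)
  set h : ℝ → ℝ := fun u => A * Real.sin (π * u) ^ (y / 2) - M * Real.sin (π * u) ^ (x / 2)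
    with hh
  have hcont : Continuous h := by
    apply Continuous.sub
    · exact continuous_const.mul (cont_pow (by positivity))
    · exact continuous_const.mul (cont_pow (by positivity))
  have expand : ∀ u ∈ uIcc (0:ℝ) 1, (fun u => (h u) ^ 2) u =
      (fun u => A ^ 2 * Real.sin (π * u) ^ y - (2 * A * M) * Real.sin (π * u) ^ ((x + y) / 2)
        + M ^ 2 * Real.sin (π * u) ^ x) u := by
    intro u hu
    rw [uIcc_of_le (by norm_num : (0:ℝ) ≤ 1)] at hu
    have hs : 0 ≤ Real.sin (π * u) := sin_nn hu
    dsimp only [hh]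
    have e1 : Real.sin (π * u) ^ (y/2) * Real.sin (π * u) ^ (y/2) = Real.sin (π * u) ^ y := by
      rw [← Real.rpow_add' hs (by positivity)]; norm_num
    have e2 : Real.sin (π * u) ^ (x/2) * Real.sin (π * u) ^ (x/2) = Real.sin (π * u) ^ x := by
      rw [← Real.rpow_add' hs (by positivity)]; norm_num
    have e3 : Real.sin (π * u) ^ (y/2) * Real.sin (π * u) ^ (x/2)
        = Real.sin (π * u) ^ ((x + y)/2) := by
      rw [← Real.rpow_add' hs (by positivity)]; ring_nf
    calc (A * Real.sin (π * u) ^ (y / 2) - M * Real.sin (π * u) ^ (x / 2)) ^ 2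
        = A ^ 2 * (Real.sin (π * u) ^ (y/2) * Real.sin (π * u) ^ (y/2))
          - (2 * A * M) * (Real.sin (π * u) ^ (y/2) * Real.sin (π * u) ^ (x/2))
          + M ^ 2 * (Real.sin (π * u) ^ (x/2) * Real.sin (π * u) ^ (x/2)) := by ring
      _ = _ := by rw [e1, e2, e3]
  have hint : ∀ c : ℝ, 0 < c → IntervalIntegrable
      (fun u : ℝ => Real.sin (π * u) ^ c) volume 0 1 :=
    fun c hc => (cont_pow hc).intervalIntegrable 0 1
  have key : (∫ u in (0:ℝ)..1, (h u) ^ 2) = A ^ 2 * C - (2 * A * M) * M + M ^ 2 * A := by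
    rw [intervalIntegral.integral_congr expand]
    rw [intervalIntegral.integral_add (((hint y hy).const_mul _).sub
        ((hint ((x+y)/2) (by positivity)).const_mul _)) ((hint x hx).const_mul _),
      intervalIntegral.integral_sub ((hint y hy).const_mul _)
        ((hint ((x+y)/2) (by positivity)).const_mul _),
      intervalIntegral.integral_const_mul, intervalIntegral.integral_const_mul,
      intervalIntegral.integral_const_mul]
    rfl
  have hposint : 0 < ∫ u in (0:ℝ)..1, (h u) ^ 2 := by
    have hpt : h (1/2) ≠ 0 ∨ h (1/6) ≠ 0 := by
      by_contra hcon
      push_neg at hcon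
      obtain ⟨h1, h2⟩ := hcon
      have s12 : Real.sin (π * (1/2)) = 1 := by
        rw [show π * (1/2) = π / 2 by ring, Real.sin_pi_div_two]
      have s16 : Real.sin (π * (1/6)) = 1/2 := by
        rw [show π * (1/6) = π / 6 by ring, Real.sin_pi_div_six]
      rw [hh] at h1 h2
      simp only [s12, s16, Real.one_rpow] at h1 h2
      have hAM : A = M := by linarith
      rw [← hAM] at h2
      have hrp : ((1:ℝ)/2) ^ (y/2) = ((1:ℝ)/2) ^ (x/2) := by
        have := sub_eq_zero.mp h2
        field_simp at this ⊢
        nlinarith [this, hApos]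
      have := congrArg Real.log hrp
      rw [Real.log_rpow (by norm_num), Real.log_rpow (by norm_num)] at this
      have hl2 : Real.log (1/2) ≠ 0 := ne_of_lt (Real.log_neg (by norm_num) (by norm_num))
      have : y / 2 = x / 2 := mul_right_cancel₀ hl2 this
      exact hne (by linarith)
    apply intervalIntegral.integral_pos (by norm_num)
    · exact ((hcont.pow 2).continuousOn)
    · intro u hu; positivity
    · rcases hpt with hp | hp
      · exact ⟨1/2, by norm_num, by positivity⟩
      · exact ⟨1/6, by norm_num, by positivity⟩
  rw [key] at hposint
  nlinarith [hposint, hApos, hMpos]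

/-- Abbreviation for the log-moment map. -/
noncomputable def LL : ℝ → ℝ := fun q => Real.log (sinI q)

lemma L_convexOn : ConvexOn ℝ (Set.Ioi (0:ℝ)) LL := by
  refine ⟨convex_Ioi 0, ?_⟩
  intro x hx y hy a b ha hb hab
  have hx' : (0:ℝ) < x := hx
  have hy' : (0:ℝ) < y := hy
  simp only [smul_eq_mul, LL]
  rcases eq_or_lt_of_le ha with rfl | ha'
  · have hb1 : b = 1 := by linarith
    simp [hb1]
  rcases eq_or_lt_of_le hb with rfl | hb'
  · have ha1 : a = 1 := by linarith
    simp [ha1]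
  have hhol := sinI_holder hx' hy' ha' hb' hab
  calc Real.log (sinI (a * x + b * y))
      ≤ Real.log (sinI x ^ a * sinI y ^ b) := by
        apply (Real.log_le_log_iff (sinI_pos (by nlinarith))
          (mul_pos (Real.rpow_pos_of_pos (sinI_pos hx') a)
            (Real.rpow_pos_of_pos (sinI_pos hy') b))).mpr hhol
    _ = a * Real.log (sinI x) + b * Real.log (sinI y) := by
        rw [Real.log_mul (Real.rpow_pos_of_pos (sinI_pos hx') a).ne'
            (Real.rpow_pos_of_pos (sinI_pos hy') b).ne',
          Real.log_rpow (sinI_pos hx'), Real.log_rpow (sinI_pos hy')]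

lemma L_mid {x y : ℝ} (hx : 0 < x) (hy : 0 < y) (hne : x ≠ y) :
    LL ((x + y) / 2) < (LL x + LL y) / 2 := by
  have h := sinI_midpoint_sq_lt hx hy hne
  have hm2 : (0:ℝ) < (x + y) / 2 := by linarith
  have h2 : Real.log (sinI ((x+y)/2) ^ 2) < Real.log (sinI x * sinI y) :=
    Real.log_lt_log (pow_pos (sinI_pos hm2) 2) h
  rw [sq, Real.log_mul (sinI_pos hm2).ne' (sinI_pos hm2).ne',
    Real.log_mul (sinI_pos hx).ne' (sinI_pos hy).ne'] at h2
  unfold LL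
  linarith

lemma L_strictConvexOn : StrictConvexOn ℝ (Set.Ioi (0:ℝ)) LL := by
  rw [strictConvexOn_iff_slope_strict_mono_adjacent]
  refine ⟨convex_Ioi 0, ?_⟩
  intro x y z hx hz hxy hyz
  by_contra hcon
  push_neg at hcon
  have hx' : (0:ℝ) < x := hx
  have hz' : (0:ℝ) < z := hz
  have hy' : (0:ℝ) < y := hx'.trans hxy
  have hymem : y ∈ Ioi (0:ℝ) := hy'
  have hle := L_convexOn.slope_mono_adjacent hx hz hxy hyz
  have heq0 : (LL y - LL x) / (y - x) = (LL z - LL y) / (z - y) := le_antisymm hle hcon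
  have heq' : (LL y - LL x) * (z - y) = (LL z - LL y) * (y - x) := by
    rw [div_eq_div_iff (by linarith) (by linarith)] at heq0
    exact heq0
  set m : ℝ := (x + z) / 2 with hm
  have hxz : x < z := hxy.trans hyz
  have hxm : x < m := by rw [hm]; linarith
  have hmz : m < z := by rw [hm]; linarith
  have hmmem : m ∈ Ioi (0:ℝ) := hx'.trans hxm
  have h2m : 2 * m = x + z := by rw [hm]; ring
  have hmid := L_mid hx' hz' hxz.ne
  have hfm : 2 * LL m = LL x + LL z := by
    rcases lt_trichotomy y m with hym | hym | hym
    · have c1 := L_convexOn.slope_mono_adjacent hx hmmem hxy hym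
      have c2 := L_convexOn.slope_mono_adjacent hymem hz hym hmz
      rw [div_le_div_iff₀ (by linarith) (by linarith)] at c1 c2
      have h4 := congrArg (· * (m - y)) heq'
      have hc2m := mul_le_mul_of_nonneg_right c2 (by linarith : (0:ℝ) ≤ y - x)
      have h3 : 0 ≤ (z - y) * ((LL y - LL x) * (m - y) - (LL m - LL y) * (y - x)) := by
        nlinarith [h4, hc2m]
      have halpha : (LL y - LL x) * (m - y) = (LL m - LL y) * (y - x) := by
        apply le_antisymm c1
        nlinarith [h3, sub_pos.2 hyz]
      have h7 : (2 * LL m - LL x - LL z) * (y - x) = 0 := by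
        linear_combination (-2 : ℝ) * halpha + heq' + (LL y - LL x) * h2m
      have := (mul_eq_zero.mp h7).resolve_right (sub_ne_zero.2 hxy.ne')
      linarith
    · rw [hym] at heq'
      have h5 : (2 * LL m - LL x - LL z) * ((z - x) / 2) = 0 := by
        linear_combination heq' + ((LL z - LL x) / 2) * h2m
      have := (mul_eq_zero.mp h5).resolve_right
        (by intro hc; exact absurd (by linarith : z = x) hxz.ne')
      linarith
    · have c1 := L_convexOn.slope_mono_adjacent hx hymem hxm hym
      have c2 := L_convexOn.slope_mono_adjacent hmmem hz hym hyz
      rw [div_le_div_iff₀ (by linarith) (by linarith)] at c1 c2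
      have h4 := congrArg (· * (y - m)) heq'
      have hc1z := mul_le_mul_of_nonneg_right c1 (by linarith : (0:ℝ) ≤ z - y)
      have h3 : 0 ≤ (y - x) * ((LL y - LL m) * (z - y) - (LL z - LL y) * (y - m)) := by
        nlinarith [h4, hc1z]
      have hbeta : (LL y - LL m) * (z - y) = (LL z - LL y) * (y - m) := by
        apply le_antisymm c2
        nlinarith [h3, sub_pos.2 hxy]
      have h7 : (2 * LL m - LL x - LL z) * (z - y) = 0 := by
        linear_combination (-2 : ℝ) * hbeta + heq' + (LL z - LL y) * h2m
      have := (mul_eq_zero.mp h7).resolve_right (sub_ne_zero.2 hyz.ne')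
      linarith
  linarith

lemma flipdiv (u v c d : ℝ) : (u - v) / (c - d) = (v - u) / (d - c) := by
  rw [← neg_div_neg_eq]; ring_nf

lemma L_anti {p : ℝ} (hp : 2 < p) :
    StrictAntiOn (fun a : ℝ => (1/2) * LL (2 * a) - (1/p) * LL (p * a)) (Set.Ici (1:ℝ)) := by
  intro a ha b hb hab
  have ha1 : (1:ℝ) ≤ a := ha
  have hp0 : (0:ℝ) < p := by linarith
  have ha0 : (0:ℝ) < a := by linarith
  have hb0 : (0:ℝ) < b := by linarith
  have hba : 0 < b - a := sub_pos.2 hab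
  have h2a : (2*a) ∈ Ioi (0:ℝ) := by simp; linarith
  have h2b : (2*b) ∈ Ioi (0:ℝ) := by simp; linarith
  have hpa : (p*a) ∈ Ioi (0:ℝ) := by simp [mul_pos hp0 ha0]
  have hpb : (p*b) ∈ Ioi (0:ℝ) := by simp [mul_pos hp0 hb0]
  have s1 := L_strictConvexOn.convexOn.secant_mono h2a h2b hpb
    (by linarith : (2:ℝ)*b ≠ 2*a) (by nlinarith : p*b ≠ 2*a) (by nlinarith : 2*b ≤ p*b)
  have s2 := L_strictConvexOn.secant_strict_mono hpb h2a hpa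
    (by nlinarith : (2:ℝ)*a ≠ p*b) (by nlinarith : p*a ≠ p*b) (by nlinarith : 2*a < p*a)
  rw [flipdiv (LL (2*a)) (LL (p*b)) (2*a) (p*b), flipdiv (LL (p*a)) (LL (p*b)) (p*a) (p*b)] at s2
  have chain : (LL (2*b) - LL (2*a)) / (2*b - 2*a) < (LL (p*b) - LL (p*a)) / (p*b - p*a) :=
    lt_of_le_of_lt s1 s2
  rw [div_lt_div_iff₀ (by linarith) (by nlinarith)] at chain
  set u := LL (2*b) - LL (2*a)
  set v := LL (p*b) - LL (p*a)
  have h8 : p * u < 2 * v := by nlinarith [chain, hba]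
  have h9 : (1/2) * u < (1/p) * v := by
    rw [div_mul_eq_mul_div, div_mul_eq_mul_div, div_lt_div_iff₀ two_pos hp0]
    nlinarith [h8]
  simp only
  unfold u v at h9
  linarith

lemma sinLogMoment_eq (q : ℝ) : sinLogMoment q = LL q := rfl

lemma sinPowMoment_eq (a q : ℝ) : sinPowMoment a q = sinI (a * q) := rfl

end Aux

/-- Strict convexity of `L`, monotonicity of the calibration map, and `γ'' > 1`
for `g = w`, `h = w^a`, `a > 1`. -/
theorem sin_weight_calibration :
    StrictConvexOn ℝ (Set.Ioi (0:ℝ)) sinLogMoment ∧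
    (∀ p : ℝ, 2 < p →
      StrictAntiOn (fun a : ℝ => (1/2) * sinLogMoment (2 * a) - (1/p) * sinLogMoment (p * a))
        (Set.Ici (1:ℝ))) ∧
    (∀ p : ℝ, 2 < p → ∀ a : ℝ, 1 < a →
      1 < (sinPowMoment 1 2) ^ (p / 2) / sinPowMoment 1 p *
            (sinPowMoment a p / (sinPowMoment a 2) ^ (p / 2))) := by
  refine ⟨?_, ?_, ?_⟩
  · exact L_strictConvexOn.congr (fun q _ => (sinLogMoment_eq q).symm)
  · intro p hp
    have := L_anti hp
    intro a ha b hb hab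
    have h := this ha hb hab
    simpa only [sinLogMoment_eq] using h
  · intro p hp a ha
    have hp0 : (0:ℝ) < p := by linarith
    have ha0 : (0:ℝ) < a := by linarith
    have hI2 : sinPowMoment 1 2 = sinI 2 := by rw [sinPowMoment_eq]; norm_num
    have hIp : sinPowMoment 1 p = sinI p := by rw [sinPowMoment_eq]; norm_num
    have hIap : sinPowMoment a p = sinI (p * a) := by rw [sinPowMoment_eq, mul_comm]
    have hIa2 : sinPowMoment a 2 = sinI (2 * a) := by rw [sinPowMoment_eq, mul_comm]
    rw [hI2, hIp, hIap, hIa2]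
    have p2 : 0 < sinI 2 := sinI_pos (by norm_num)
    have pp : 0 < sinI p := sinI_pos hp0
    have ppa : 0 < sinI (p * a) := sinI_pos (by positivity)
    have p2a : 0 < sinI (2 * a) := sinI_pos (by positivity)
    -- apply the strict antitonicity at 1 and a
    have hanti := L_anti hp (mem_Ici.mpr le_rfl) (mem_Ici.mpr ha.le) ha
    simp only at hanti
    have hFa : (1/2) * LL (2 * a) - (1/p) * LL (p * a)
        < (1/2) * LL (2 * 1) - (1/p) * LL (p * 1) := hanti
    rw [mul_one, mul_one] at hFa
    have hmul := mul_lt_mul_of_pos_left hFa hp0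
    have e1 : p * ((1/2) * LL (2 * a) - (1/p) * LL (p * a))
        = (p/2) * LL (2 * a) - LL (p * a) := by field_simp
    have e2 : p * ((1/2) * LL 2 - (1/p) * LL p) = (p/2) * LL 2 - LL p := by field_simp
    rw [e1, e2] at hmul
    set X := sinI 2 ^ (p/2) / sinI p * (sinI (p * a) / sinI (2 * a) ^ (p/2)) with hX
    have hXpos : 0 < X := by
      apply mul_pos (div_pos (Real.rpow_pos_of_pos p2 _) pp)
        (div_pos ppa (Real.rpow_pos_of_pos p2a _))
    have hlogX : Real.log X = (p/2) * LL 2 - LL p + (LL (p * a) - (p/2) * LL (2 * a)) := by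
      rw [hX, Real.log_mul (div_pos (Real.rpow_pos_of_pos p2 _) pp).ne'
          (div_pos ppa (Real.rpow_pos_of_pos p2a _)).ne',
        Real.log_div (Real.rpow_pos_of_pos p2 _).ne' pp.ne',
        Real.log_div ppa.ne' (Real.rpow_pos_of_pos p2a _).ne',
        Real.log_rpow p2, Real.log_rpow p2a]
      unfold LL
      ring
    have hlogpos : 0 < Real.log X := by rw [hlogX]; linarith
    exact (Real.log_pos_iff hXpos.le).mp hlogpos
end
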